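/- Let α : ℝ² → (0,∞) be C² and ℤ²-periodic, and let r⁰ : ℝ² → (0,∞) be C³ and ℤ²-periodic with −∂²_{y₁} r⁰ − ∂²_{y₂}(α r⁰) = 0 on ℝ². Let s > 0 satisfy s·|∂³_{y₁} r⁰ + α ∂_{y₁}∂²_{y₂} r⁰| ≤ 1/2 on ℝ², and define v := s ∂_{y₁} r⁰, w := 1 + ∂²_{y₁} v + α ∂²_{y₂} v, a₁ := 1/w, and r := w r⁰. Then ∫_{[0,1]²} a₁(y) r(y) ∂_{y₁} v(y) dy = −s ∫_{[0,1]²} (∂_{y₁} r⁰(y))² dy. In particular, if ∂_{y₁} r⁰ is not identically zero, then ∫_{[0,1]²} a₁ r ∂_{y₁} v dy < 0. -/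

import Mathlib

open MeasureTheory

/-- The unit cube `[0,1]^n` in `ℝ^n`. -/
def unitCube (n : ℕ) : Set (Fin n → ℝ) := Set.Icc 0 1

/-- Partial derivative `∂_{y_i} f`. -/
noncomputable def pd {n : ℕ} (f : (Fin n → ℝ) → ℝ) (i : Fin n) : (Fin n → ℝ) → ℝ :=
  fun y => fderiv ℝ f y (Pi.single i 1)

/-- Second partial derivative `∂_{y_i} ∂_{y_j} f`. -/
noncomputable def pd2 {n : ℕ} (f : (Fin n → ℝ) → ℝ) (i j : Fin n) : (Fin n → ℝ) → ℝ :=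
  pd (pd f j) i

/-- Third partial derivative `∂_{y_i} ∂_{y_j} ∂_{y_k} f`. -/
noncomputable def pd3 {n : ℕ} (f : (Fin n → ℝ) → ℝ) (i j k : Fin n) : (Fin n → ℝ) → ℝ :=
  pd (pd (pd f k) j) i

/-- `ℤ^n`-periodicity. -/
def ZPeriodic {n : ℕ} (f : (Fin n → ℝ) → ℝ) : Prop :=
  ∀ (y : Fin n → ℝ) (z : Fin n → ℤ), f (y + fun i => (z i : ℝ)) = f y

/-- Admissible matrix field: C², periodic, symmetric, uniformly elliptic. -/
def IsAdmissible {n : ℕ} (a : Fin n → Fin n → (Fin n → ℝ) → ℝ) : Prop :=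
  (∀ i j, ContDiff ℝ 2 (a i j)) ∧
  (∀ i j, ZPeriodic (a i j)) ∧
  (∀ i j y, a i j y = a j i y) ∧
  ∃ lam Lam : ℝ, 0 < lam ∧ lam ≤ Lam ∧
    ∀ (y ξ : Fin n → ℝ),
      lam * (∑ i, ξ i ^ 2) ≤ ∑ i, ∑ j, a i j y * ξ i * ξ j ∧
      ∑ i, ∑ j, a i j y * ξ i * ξ j ≤ Lam * (∑ i, ξ i ^ 2)

/-- Corrector pair `(v^{kl}, ā_{kl})`. -/
def IsCorrector {n : ℕ} (a : Fin n → Fin n → (Fin n → ℝ) → ℝ)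
    (k l : Fin n) (v : (Fin n → ℝ) → ℝ) (abar : ℝ) : Prop :=
  ContDiff ℝ 2 v ∧ ZPeriodic v ∧
  ∀ y, -(∑ i, ∑ j, a i j y * pd2 v i j y) - a k l y = -abar

/-- Invariant measure for the matrix field `a`. -/
def IsInvariantMeasure {n : ℕ} (a : Fin n → Fin n → (Fin n → ℝ) → ℝ)
    (r : (Fin n → ℝ) → ℝ) : Prop :=
  ContDiff ℝ 2 r ∧ ZPeriodic r ∧ (∀ y, 0 < r y) ∧
  (∀ y, ∑ i, ∑ j, pd2 (fun x => a i j x * r x) i j y = 0) ∧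
  ∫ y in unitCube n, r y = 1

/-- `u` is Cᵐ on a neighborhood of the closure of `U`, with all partial
derivatives up to order `m` bounded there. -/
def SmoothBounded {n : ℕ} (m : ℕ) (U : Set (Fin n → ℝ)) (u : (Fin n → ℝ) → ℝ) : Prop :=
  ∃ V : Set (Fin n → ℝ), IsOpen V ∧ closure U ⊆ V ∧ ContDiffOn ℝ m u V ∧
    ∀ k : ℕ, k ≤ m → ∃ M : ℝ, ∀ x ∈ V, ‖iteratedFDerivWithin ℝ k u V x‖ ≤ M

section Helpers

lemma pd_contDiff {n m : ℕ} {N : WithTop ℕ∞} {f : (Fin n → ℝ) → ℝ}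
    (hf : ContDiff ℝ N f) (h : (m : WithTop ℕ∞) + 1 ≤ N) (i : Fin n) :
    ContDiff ℝ m (pd f i) :=
  (hf.fderiv_right h).clm_apply contDiff_const

lemma pd_const_mul {n : ℕ} {f : (Fin n → ℝ) → ℝ} {y : Fin n → ℝ} (c : ℝ)
    (hf : DifferentiableAt ℝ f y) (i : Fin n) :
    pd (fun x => c * f x) i y = c * pd f i y := by
  unfold pd
  rw [fderiv_const_mul hf c]
  simp

lemma pd2_eq {n : ℕ} {f : (Fin n → ℝ) → ℝ} (hf : ContDiff ℝ 2 f) (i j : Fin n)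
    (y : Fin n → ℝ) :
    pd2 f i j y = fderiv ℝ (fderiv ℝ f) y (Pi.single i 1) (Pi.single j 1) := by
  have hd : DifferentiableAt ℝ (fderiv ℝ f) y :=
    ((hf.fderiv_right (m := 1) (by norm_num)).differentiable (by norm_num)).differentiableAt
  have : pd2 f i j y
      = fderiv ℝ (fun y => (fderiv ℝ f y)
          ((fun _ : Fin n → ℝ => (Pi.single j 1 : Fin n → ℝ)) y)) y (Pi.single i 1) := rfl
  rw [this, fderiv_clm_apply hd (differentiableAt_const _)]
  simp

lemma pd2_symm {n : ℕ} {f : (Fin n → ℝ) → ℝ} (hf : ContDiff ℝ 2 f) (i j : Fin n)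
    (y : Fin n → ℝ) : pd2 f i j y = pd2 f j i y := by
  rw [pd2_eq hf i j y, pd2_eq hf j i y]
  exact (hf.contDiffAt.isSymmSndFDerivAt (by norm_num)) _ _

lemma fderiv_zperiodic {n : ℕ} {f : (Fin n → ℝ) → ℝ} (hd : Differentiable ℝ f)
    (hf : ZPeriodic f) (y : Fin n → ℝ) (z : Fin n → ℤ) :
    fderiv ℝ f (y + fun i => (z i : ℝ)) = fderiv ℝ f y := by
  set c : Fin n → ℝ := fun i => (z i : ℝ)
  have A : HasFDerivAt (fun x : Fin n → ℝ => x + c)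
      (ContinuousLinearMap.id ℝ (Fin n → ℝ)) y := (hasFDerivAt_id y).add_const c
  have B : HasFDerivAt (f ∘ fun x => x + c) ((fderiv ℝ f (y + c)).comp
      (ContinuousLinearMap.id ℝ (Fin n → ℝ))) y := ((hd (y + c)).hasFDerivAt).comp y A
  have hfc : (f ∘ fun x => x + c) = f := by funext x; exact hf x z
  rw [hfc, ContinuousLinearMap.comp_id] at B
  rw [← B.fderiv]

lemma pd_zperiodic {n : ℕ} {f : (Fin n → ℝ) → ℝ} (hd : Differentiable ℝ f)
    (hf : ZPeriodic f) (i : Fin n) : ZPeriodic (pd f i) := by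
  intro y z
  unfold pd
  rw [fderiv_zperiodic hd hf y z]

lemma integral_pd_zero {g : (Fin 2 → ℝ) → ℝ} (hg : ContDiff ℝ 1 g) (hper : ZPeriodic g) :
    ∫ y in Set.Icc (0 : Fin 2 → ℝ) 1, pd g 0 y = 0 := by
  have hcont : Continuous (pd g 0) :=
    ((hg.fderiv_right (m := 0) le_rfl).clm_apply contDiff_const).continuous
  set f : Fin 2 → (Fin 2 → ℝ) → ℝ := ![g, fun _ => 0] with hf
  set f' : Fin 2 → (Fin 2 → ℝ) → (Fin 2 → ℝ) →L[ℝ] ℝ := ![fun x => fderiv ℝ g x, fun _ => 0]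
  have key := MeasureTheory.integral_divergence_of_hasFDerivAt_off_countable'
    (a := (0 : Fin 2 → ℝ)) (b := 1) (by intro i; norm_num) f f' ∅ Set.countable_empty
    (by
      intro i
      fin_cases i
      · exact hg.continuous.continuousOn
      · exact continuousOn_const)
    (by
      intro x _ i
      fin_cases i
      · exact (hg.differentiable one_ne_zero x).hasFDerivAt
      · exact hasFDerivAt_const 0 x)
    (by
      have : (fun x => ∑ i : Fin 2, f' i x (Pi.single i 1)) = fun x => pd g 0 x := by
        funext x
        simp [Fin.sum_univ_two, f', pd]
      rw [this]
      exact hcont.integrableOn_Icc)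
  have hsum : (fun x => ∑ i : Fin 2, f' i x (Pi.single i 1)) = fun x => pd g 0 x := by
    funext x
    simp [Fin.sum_univ_two, f', pd]
  rw [hsum] at key
  rw [key]
  have h1 : ∀ x : Fin 1 → ℝ, g (Fin.cons (1:ℝ) x) = g (Fin.cons (0:ℝ) x) := by
    intro x
    have := hper (Fin.cons (0:ℝ) x) (Pi.single 0 1)
    rw [← this]
    congr 1
    funext i
    refine Fin.cases ?_ ?_ i
    · simp
    · intro j
      simp [Pi.single_eq_of_ne (Fin.succ_ne_zero j)]
  simp [Fin.sum_univ_two, f, h1]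

lemma integral_pos_of_periodic {g : (Fin 2 → ℝ) → ℝ} (hc : Continuous g)
    (hper : ZPeriodic g) (hnn : ∀ y, 0 ≤ g y) (y₀ : Fin 2 → ℝ) (hy₀ : g y₀ ≠ 0) :
    0 < ∫ y in Set.Icc (0 : Fin 2 → ℝ) 1, g y := by
  set y' : Fin 2 → ℝ := fun i => Int.fract (y₀ i) with hy'
  have hgy' : g y' = g y₀ := by
    have := hper y' (fun i => ⌊y₀ i⌋)
    rw [← this]
    congr 1
    funext i
    simp only [Pi.add_apply, hy']
    rw [Int.fract]
    ring
  have hgy'pos : 0 < g y' := by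
    rw [hgy']
    exact lt_of_le_of_ne (hnn y₀) (Ne.symm hy₀)
  have hy'mem : ∀ i, y' i ∈ Set.Ico (0:ℝ) 1 := fun i => ⟨Int.fract_nonneg _, Int.fract_lt_one _⟩
  have hopen : IsOpen (Function.support g) := by
    have : Function.support g = g ⁻¹' {0}ᶜ := by
      ext x; simp [Function.mem_support]
    rw [this]
    exact (isOpen_compl_singleton).preimage hc
  obtain ⟨ε, hε, hball⟩ := Metric.isOpen_iff.1 hopen y'
    (by simp [Function.mem_support, hgy'pos.ne'])
  set δ : ℝ := min (ε / 2) (min (1 - y' 0) (1 - y' 1)) with hδdef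
  have hδpos : 0 < δ := by
    refine lt_min (by linarith) (lt_min ?_ ?_)
    · have := (hy'mem 0).2; linarith
    · have := (hy'mem 1).2; linarith
  have hbox : Set.Icc y' (fun i => y' i + δ) ⊆ Function.support g ∩ Set.Icc 0 1 := by
    intro x hx
    constructor
    · apply hball
      rw [Metric.mem_ball, dist_comm]
      have : dist y' x ≤ δ := by
        rw [dist_pi_le_iff hδpos.le]
        intro i
        rw [Real.dist_eq, abs_le]
        constructor
        · have h2' : x i ≤ y' i + δ := hx.2 i; linarith
        · have := hx.1 i; linarith
      calc dist y' x ≤ δ := this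
        _ ≤ ε / 2 := min_le_left _ _
        _ < ε := by linarith
    · constructor
      · intro i
        have := hx.1 i
        have := (hy'mem i).1
        simp only [Pi.zero_apply]
        linarith
      · intro i
        have h2 : x i ≤ y' i + δ := hx.2 i
        have hδle : δ ≤ 1 - y' i := by
          fin_cases i
          · exact le_trans (min_le_right _ _) (min_le_left _ _)
          · exact le_trans (min_le_right _ _) (min_le_right _ _)
        simp only [Pi.one_apply]
        linarith
  have hvol : 0 < volume (Function.support g ∩ Set.Icc (0 : Fin 2 → ℝ) 1) := by
    refine lt_of_lt_of_le ?_ (measure_mono hbox)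
    rw [Real.volume_Icc_pi]
    have heq : ∀ i ∈ Finset.univ, ENNReal.ofReal ((fun i => y' i + δ) i - y' i)
        = ENNReal.ofReal δ := by intro i _; simp
    rw [Finset.prod_congr rfl heq, Finset.prod_const]
    exact ENNReal.pow_pos (ENNReal.ofReal_pos.2 hδpos) _
  rw [MeasureTheory.setIntegral_pos_iff_support_of_nonneg_ae]
  · exact hvol
  · exact (Filter.Eventually.of_forall (fun x => hnn x)).filter_mono
      (MeasureTheory.ae_mono MeasureTheory.Measure.restrict_le_self)
  · exact hc.integrableOn_Icc

end Helpers

/-- in the explicit construction of Proposition 3.1, the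
homogenization coefficient equals `−s ∫ (∂_{y₁} r⁰)²`, hence is negative when
`∂_{y₁} r⁰ ≢ 0`. -/
theorem coefficient_formula
    (α : (Fin 2 → ℝ) → ℝ) (hαC : ContDiff ℝ 2 α) (hαper : ZPeriodic α)
    (hαpos : ∀ y, 0 < α y)
    (r0 : (Fin 2 → ℝ) → ℝ) (hr0C : ContDiff ℝ 3 r0) (hr0per : ZPeriodic r0)
    (hr0pos : ∀ y, 0 < r0 y)
    (hr0pde : ∀ y, -(pd2 r0 0 0 y) - pd2 (fun x => α x * r0 x) 1 1 y = 0)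
    (s : ℝ) (hs : 0 < s)
    (hsmall : ∀ y, s * |pd3 r0 0 0 0 y + α y * pd3 r0 0 1 1 y| ≤ 1 / 2)
    (v w a₁ r : (Fin 2 → ℝ) → ℝ)
    (hv : ∀ y, v y = s * pd r0 0 y)
    (hw : ∀ y, w y = 1 + pd2 v 0 0 y + α y * pd2 v 1 1 y)
    (ha₁ : ∀ y, a₁ y = (w y)⁻¹)
    (hrdef : ∀ y, r y = w y * r0 y) :
    (∫ y in unitCube 2, a₁ y * r y * pd v 0 y)
        = -s * ∫ y in unitCube 2, (pd r0 0 y) ^ 2 ∧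
    (¬ (∀ y, pd r0 0 y = 0) → (∫ y in unitCube 2, a₁ y * r y * pd v 0 y) < 0) := by
  
  have hr0C2 : ContDiff ℝ 2 r0 := hr0C.of_le (by norm_num)
  have h10 : ContDiff ℝ 2 (pd r0 0) := pd_contDiff hr0C (by norm_num) 0
  have h11 : ContDiff ℝ 2 (pd r0 1) := pd_contDiff hr0C (by norm_num) 1
  have hvfun : v = fun y => s * pd r0 0 y := funext hv
  have hpdv0 : ∀ y, pd v 0 y = s * pd2 r0 0 0 y := by
    intro y
    rw [hvfun]
    exact pd_const_mul s (h10.differentiable two_ne_zero y) 0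
  have hpdv0fun : pd v 0 = fun y => s * pd (pd r0 0) 0 y := funext hpdv0
  have hpd2v00 : ∀ y, pd2 v 0 0 y = s * pd3 r0 0 0 0 y := by
    intro y
    show pd (pd v 0) 0 y = _
    rw [hpdv0fun]
    exact pd_const_mul s
      (((pd_contDiff (m := 1) h10 (by norm_num) 0).differentiable (by norm_num)) y) 0
  have hpdv1fun : pd v 1 = fun y => s * pd (pd r0 0) 1 y := by
    funext y
    rw [hvfun]
    exact pd_const_mul s (h10.differentiable two_ne_zero y) 1
  have hswap1 : pd (pd r0 0) 1 = pd (pd r0 1) 0 := funext fun y => pd2_symm hr0C2 1 0 y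
  have hpd2v11 : ∀ y, pd2 v 1 1 y = s * pd3 r0 0 1 1 y := by
    intro y
    show pd (pd v 1) 1 y = _
    rw [hpdv1fun]
    rw [pd_const_mul s
      (((pd_contDiff (m := 1) h10 (by norm_num) 1).differentiable (by norm_num)) y) 1]
    congr 1
    rw [hswap1]
    exact pd2_symm h11 1 0 y
  have hwval : ∀ y, w y = 1 + s * (pd3 r0 0 0 0 y + α y * pd3 r0 0 1 1 y) := by
    intro y
    rw [hw, hpd2v00, hpd2v11]
    ring
  have hwpos : ∀ y, (1:ℝ)/2 ≤ w y := by
    intro y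
    have habs : |s * (pd3 r0 0 0 0 y + α y * pd3 r0 0 1 1 y)| ≤ 1/2 := by
      rw [abs_mul, abs_of_pos hs]
      exact hsmall y
    have h2 := (abs_le.1 habs).1
    rw [hwval y]
    linarith
  have hwne : ∀ y, w y ≠ 0 := fun y => by have := hwpos y; positivity
  have hintegrand : ∀ y, a₁ y * r y * pd v 0 y = s * (r0 y * pd2 r0 0 0 y) := by
    intro y
    rw [ha₁, hrdef, hpdv0]
    field_simp [hwne y]
  have hpdper : ZPeriodic (pd r0 0) :=
    pd_zperiodic (hr0C.differentiable (by norm_num)) hr0per 0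
  set G : (Fin 2 → ℝ) → ℝ := fun y => r0 y * pd r0 0 y with hG
  have hGC : ContDiff ℝ 1 G := (hr0C.of_le (by norm_num)).mul (h10.of_le one_le_two)
  have hGper : ZPeriodic G := by
    intro y z
    show r0 _ * pd r0 0 _ = r0 y * pd r0 0 y
    rw [hr0per y z, hpdper y z]
  have hpdG : ∀ y, pd G 0 y = pd r0 0 y ^ 2 + r0 y * pd2 r0 0 0 y := by
    intro y
    show fderiv ℝ (fun y => r0 y * pd r0 0 y) y (Pi.single 0 1) = _
    rw [fderiv_fun_mul (hr0C.differentiable (by norm_num) y)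
      (h10.differentiable two_ne_zero y)]
    simp only [ContinuousLinearMap.add_apply, ContinuousLinearMap.smul_apply, smul_eq_mul]
    unfold pd2 pd
    ring
  have hzero : ∫ y in unitCube 2, pd G 0 y = 0 := integral_pd_zero hGC hGper
  have hi1 : MeasureTheory.IntegrableOn (fun y => pd r0 0 y ^ 2)
      (Set.Icc (0 : Fin 2 → ℝ) 1) := (h10.continuous.pow 2).integrableOn_Icc
  have hi2 : MeasureTheory.IntegrableOn (fun y => r0 y * pd2 r0 0 0 y)
      (Set.Icc (0 : Fin 2 → ℝ) 1) :=
    (hr0C.continuous.mul (pd_contDiff (m := 1) h10 (by norm_num) 0).continuous).integrableOn_Icc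
  have hsplit : (∫ y in unitCube 2, pd r0 0 y ^ 2)
      + (∫ y in unitCube 2, r0 y * pd2 r0 0 0 y) = 0 := by
    rw [← hzero]
    show _ = ∫ y in Set.Icc (0 : Fin 2 → ℝ) 1, pd G 0 y
    rw [show (fun y => pd G 0 y) = fun y => pd r0 0 y ^ 2 + r0 y * pd2 r0 0 0 y from
      funext hpdG]
    exact (MeasureTheory.integral_add hi1 hi2).symm
  have hmain : (∫ y in unitCube 2, a₁ y * r y * pd v 0 y)
      = -s * ∫ y in unitCube 2, pd r0 0 y ^ 2 := by
    rw [show (fun y => a₁ y * r y * pd v 0 y)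
        = fun y => s * (r0 y * pd2 r0 0 0 y) from funext hintegrand]
    rw [MeasureTheory.integral_const_mul]
    have : (∫ y in unitCube 2, r0 y * pd2 r0 0 0 y)
        = -∫ y in unitCube 2, pd r0 0 y ^ 2 := by linarith
    rw [this]
    ring
  refine ⟨hmain, ?_⟩
  intro hne
  obtain ⟨y₀, hy₀⟩ := not_forall.1 hne
  have hpos : 0 < ∫ y in unitCube 2, pd r0 0 y ^ 2 := by
    refine integral_pos_of_periodic ((h10.continuous).pow 2) ?_
      (fun y => sq_nonneg _) y₀ (pow_ne_zero 2 hy₀)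
    intro y z
    show pd r0 0 _ ^ 2 = _
    rw [hpdper y z]
  rw [hmain]
  have := mul_pos hs hpos
  linarith
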